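/- Let V be a real Hilbert space with inner product a, and let P₁,…,P_N be orthogonal projections onto closed subspaces V₁,…,V_N. Suppose there are constants ℰᵢⱼ ∈ [0,1] with a(vᵢ,vⱼ) ≤ ℰᵢⱼ a(vᵢ,vᵢ)^{1/2} a(vⱼ,vⱼ)^{1/2} for all vᵢ ∈ Vᵢ, vⱼ ∈ Vⱼ. Then with P = Σᵢ Pᵢ, for every v ∈ V, a(Pv, Pv) ≤ ‖ℰ‖₂² a(v,v), where ‖ℰ‖₂ is the spectral norm of the N×N matrix with entries ℰᵢⱼ. -/

import Mathlib

open RealInnerProductSpace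

/-- Spectral norm (operator 2-norm) of a real matrix. -/
noncomputable def spectralNorm2 {N : ℕ} (E : Matrix (Fin N) (Fin N) ℝ) : ℝ :=
  ‖(Matrix.toEuclideanCLM (𝕜 := ℝ) E : EuclideanSpace ℝ (Fin N) →L[ℝ] EuclideanSpace ℝ (Fin N))‖

/-- Boundedness of the additive Schwarz operator under the strengthened
Cauchy–Schwarz assumption: `a(Pv,Pv) ≤ ‖ℰ‖₂² a(v,v)` with `P = Σᵢ Pᵢ`. -/
theorem asm_boundedness {V : Type*} [NormedAddCommGroup V] [InnerProductSpace ℝ V]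
    {N : ℕ} (Vs : Fin N → Submodule ℝ V) (hclosed : ∀ i, IsClosed (Vs i : Set V))
    (P : Fin N → V →ₗ[ℝ] V)
    (hPmem : ∀ i (v : V), P i v ∈ Vs i)
    (hPproj : ∀ i (v : V), ∀ w ∈ Vs i, ⟪P i v, w⟫ = ⟪v, w⟫)
    (E : Matrix (Fin N) (Fin N) ℝ)
    (hE0 : ∀ i j, 0 ≤ E i j) (hE1 : ∀ i j, E i j ≤ 1)
    (hCS : ∀ i j, ∀ vi ∈ Vs i, ∀ vj ∈ Vs j,
      ⟪vi, vj⟫ ≤ E i j * Real.sqrt ⟪vi, vi⟫ * Real.sqrt ⟪vj, vj⟫) :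
    ∀ v : V, ⟪∑ i, P i v, ∑ i, P i v⟫ ≤ (spectralNorm2 E) ^ 2 * ⟪v, v⟫ := by
  intro v
  set w : V := ∑ i, P i v with hw
  set x : EuclideanSpace ℝ (Fin N) := WithLp.toLp 2 (fun i => ‖P i v‖) with hx
  have hnormi : ∀ i : Fin N, Real.sqrt ⟪P i v, P i v⟫ = ‖P i v‖ := by
    intro i
    rw [real_inner_self_eq_norm_sq]
    exact Real.sqrt_sq (norm_nonneg _)
  -- step 1 : ⟪w,w⟫ ≤ ∑ᵢⱼ Eᵢⱼ ‖Pᵢv‖ ‖Pⱼv‖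
  have h1 : ⟪w, w⟫ ≤ ∑ i, ∑ j, E i j * ‖P i v‖ * ‖P j v‖ := by
    rw [hw, sum_inner]
    apply Finset.sum_le_sum
    intro i _
    rw [inner_sum]
    apply Finset.sum_le_sum
    intro j _
    have := hCS i j _ (hPmem i v) _ (hPmem j v)
    rwa [hnormi i, hnormi j] at this
  -- step 2 : interpret the sum via the matrix
  have h2 : ∑ i, ∑ j, E i j * ‖P i v‖ * ‖P j v‖
      = ⟪x, (Matrix.toEuclideanCLM (𝕜 := ℝ) E) x⟫ := by
    rw [PiLp.inner_apply]
    refine Finset.sum_congr rfl fun i _ => ?_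
    have : (Matrix.toEuclideanCLM (𝕜 := ℝ) E) x i = ∑ j, E i j * x j := by
      simp [Matrix.toEuclideanCLM, Matrix.toLin'_apply, Matrix.mulVec, dotProduct]
      rfl
    rw [this, RCLike.inner_apply, starRingEnd_apply, star_trivial, Finset.sum_mul]
    refine Finset.sum_congr rfl fun j _ => ?_
    simp [hx]
    ring
  have hxnorm : ‖x‖ ^ 2 = ∑ i, ⟪v, P i v⟫ := by
    rw [← real_inner_self_eq_norm_sq, PiLp.inner_apply]
    refine Finset.sum_congr rfl fun i _ => ?_
    have := hPproj i v (P i v) (hPmem i v)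
    rw [RCLike.inner_apply, starRingEnd_apply, star_trivial]
    rw [show ((x i) * (x i) : ℝ) = ‖P i v‖ ^ 2 by simp [hx]; ring,
      ← real_inner_self_eq_norm_sq, this]
  have h3 : ∑ i, ⟪v, P i v⟫ = ⟪v, w⟫ := by rw [hw, inner_sum]
  have h4 : ⟪x, (Matrix.toEuclideanCLM (𝕜 := ℝ) E) x⟫ ≤ spectralNorm2 E * ‖x‖ ^ 2 := by
    calc ⟪x, (Matrix.toEuclideanCLM (𝕜 := ℝ) E) x⟫
        ≤ ‖x‖ * ‖(Matrix.toEuclideanCLM (𝕜 := ℝ) E) x‖ := real_inner_le_norm _ _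
      _ ≤ ‖x‖ * (spectralNorm2 E * ‖x‖) := by
          apply mul_le_mul_of_nonneg_left _ (norm_nonneg _)
          exact ContinuousLinearMap.le_opNorm _ _
      _ = spectralNorm2 E * ‖x‖ ^ 2 := by ring
  have hvw : ⟪v, w⟫ ≤ ‖v‖ * ‖w‖ := real_inner_le_norm _ _
  have hEnn : 0 ≤ spectralNorm2 E := norm_nonneg _
  have key : ‖w‖ ^ 2 ≤ spectralNorm2 E * (‖v‖ * ‖w‖) := by
    have := h1.trans (le_of_eq h2) |>.trans h4
    rw [real_inner_self_eq_norm_sq] at this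
    calc ‖w‖ ^ 2 ≤ spectralNorm2 E * ‖x‖ ^ 2 := this
      _ = spectralNorm2 E * (∑ i, ⟪v, P i v⟫) := by rw [hxnorm]
      _ = spectralNorm2 E * ⟪v, w⟫ := by rw [h3]
      _ ≤ spectralNorm2 E * (‖v‖ * ‖w‖) := mul_le_mul_of_nonneg_left hvw hEnn
  rw [real_inner_self_eq_norm_sq, real_inner_self_eq_norm_sq]
  nlinarith [sq_nonneg (spectralNorm2 E * ‖v‖ - ‖w‖), norm_nonneg w, norm_nonneg v]
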